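/- arXiv:2311.04656 — 2 statements merged into one kernel-verified Lean document; each statement's English description precedes it below -/
import Mathlib

section
/- Every leaf-attached complete multipartite graph has no pivot-minor isomorphic to 2P₂. -/
/-!  Basic notions: local complementation, edge pivot, pivot-equivalence, pivot-minors. -/

variable {V : Type*} {W : Type*}

/-- Local complementation at a vertex `u`: complement the adjacency inside the
neighbourhood of `u`. -/
def localComp (G : SimpleGraph V) (u : V) : SimpleGraph V where
  Adj x y := x ≠ y ∧
    ((G.Adj u x ∧ G.Adj u y ∧ ¬ G.Adj x y) ∨ (¬ (G.Adj u x ∧ G.Adj u y) ∧ G.Adj x y))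
  symm := by
    constructor
    intro x y h
    obtain ⟨hne, h⟩ := h
    refine ⟨hne.symm, ?_⟩
    rw [G.adj_comm y x]
    tauto
  loopless := by
    constructor
    intro x h
    exact h.1 rfl

/-- The edge pivot `G ∧ uv = ((G * u) * v) * u`. -/
def pivotEdge (G : SimpleGraph V) (u v : V) : SimpleGraph V :=
  localComp (localComp (localComp G u) v) u

/-- One pivot step: pivoting along an edge of the graph. -/
def PivotStep (G G' : SimpleGraph V) : Prop :=
  ∃ u v, G.Adj u v ∧ G' = pivotEdge G u v

/-- Two graphs on the same vertex set are pivot-equivalent if one can be obtained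
from the other by a sequence of edge pivots. -/
def PivotEquiv (G G' : SimpleGraph V) : Prop :=
  Relation.ReflTransGen PivotStep G G'

/-- `H` is a pivot-minor of `G` on the vertex subset `s`: `H` is obtained (up to
isomorphism) from `G` by a sequence of edge pivots and deletions of the vertices
outside `s`.  Since pivoting an edge commutes with deleting a vertex not on that
edge, this is equivalent to performing all the edge pivots first and then deleting
the vertices outside `s`, which is how we state it. -/
def HasPivotMinorOn (G : SimpleGraph V) (s : Set V) (H : SimpleGraph W) : Prop :=
  ∃ G' : SimpleGraph V, PivotEquiv G G' ∧ Nonempty ((G'.induce s) ≃g H)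

/-- `G` contains a pivot-minor isomorphic to `H`. -/
def HasPivotMinor (G : SimpleGraph V) (H : SimpleGraph W) : Prop :=
  ∃ s : Set V, HasPivotMinorOn G s H

/-- `G'` is a result of contracting the vertex `v` in `G` (denoted `G/v`):
if `v` is isolated this is `G - v`, and otherwise it is `(G ∧ zv) - v`
for some neighbour `z` of `v` (well defined up to pivot-equivalence). -/
def IsContraction (G : SimpleGraph V) (v : V) (G' : SimpleGraph ↥{u : V | u ≠ v}) : Prop :=
  ((∀ z, ¬ G.Adj v z) ∧ G' = G.induce {u : V | u ≠ v}) ∨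
    (∃ z, G.Adj v z ∧ G' = (pivotEdge G z v).induce {u : V | u ≠ v})

/-- `G` is `H`-pivot-unique: `G` contains a pivot-minor isomorphic to `H` and for
every vertex `v`, at most one of `G - v` and `G / v` contains a pivot-minor
isomorphic to `H`. -/
def PivotUnique (G : SimpleGraph V) (H : SimpleGraph W) : Prop :=
  HasPivotMinor G H ∧
    ∀ v : V, ¬ (HasPivotMinor (G.induce {u : V | u ≠ v}) H ∧
      ∃ G' : SimpleGraph ↥{u : V | u ≠ v}, IsContraction G v G' ∧ HasPivotMinor G' H)

/-- `G` contains an induced subgraph isomorphic to `H`. -/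
def HasInducedSubgraphIso (G : SimpleGraph V) (H : SimpleGraph W) : Prop :=
  ∃ s : Set V, Nonempty ((G.induce s) ≃g H)

/-- The graph `2P₂`: the disjoint union of the two edges `0-1` and `2-3`. -/
def twoP2 : SimpleGraph (Fin 4) :=
  SimpleGraph.fromRel (fun x y => (x.val = 0 ∧ y.val = 1) ∨ (x.val = 2 ∧ y.val = 3))

/-- A leaf-attached complete multipartite graph: a graph obtained from a complete
multipartite graph (two vertices adjacent iff they lie in different parts, the
parts being the classes of the equivalence relation `r` on the `core`) by
attaching zero or more pendant vertices to each singleton vertex.  Every vertex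
outside the `core` is a pendant vertex whose unique neighbour is a vertex of the
`core` forming a part of size one. -/
def IsLeafAttachedCMP {V : Type*} (G : SimpleGraph V) : Prop :=
  ∃ (core : Set V) (r : V → V → Prop),
    (∀ x ∈ core, r x x) ∧ (∀ x y, r x y → r y x) ∧ (∀ x y z, r x y → r y z → r x z) ∧
    (∀ x y, r x y → x ∈ core ∧ y ∈ core) ∧
    (∀ x ∈ core, ∀ y ∈ core, (G.Adj x y ↔ ¬ r x y)) ∧
    (∀ v, v ∉ core → ∃ u ∈ core, (∀ w, G.Adj v w ↔ w = u) ∧ (∀ w, r u w → w = u))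

set_option maxHeartbeats 2000000

section Aux

lemma localComp_adj (G : SimpleGraph V) (u x y : V) :
    (localComp G u).Adj x y ↔ x ≠ y ∧
      ((G.Adj u x ∧ G.Adj u y ∧ ¬ G.Adj x y) ∨ (¬ (G.Adj u x ∧ G.Adj u y) ∧ G.Adj x y)) :=
  Iff.rfl

def Tog (G : SimpleGraph V) (u v x y : V) : Prop :=
  (G.Adj u x ∨ G.Adj v x) ∧ (G.Adj u y ∨ G.Adj v y) ∧
    (¬ (G.Adj u x ↔ G.Adj u y) ∨ ¬ (G.Adj v x ↔ G.Adj v y))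

lemma pivot_adj_uv {G : SimpleGraph V} {u v : V} (huv : G.Adj u v) :
    (pivotEdge G u v).Adj u v := by
  have h1 : u ≠ v := huv.ne
  have h2 : G.Adj v u := huv.symm
  simp only [pivotEdge, localComp_adj, SimpleGraph.irrefl, G.adj_comm v u]
  simp [huv, h1, h1.symm]

lemma pivot_adj_u {G : SimpleGraph V} {u v : V} (huv : G.Adj u v) (y : V)
    (hyu : y ≠ u) (hyv : y ≠ v) :
    (pivotEdge G u v).Adj u y ↔ G.Adj v y := by
  have h1 : u ≠ v := huv.ne
  have h2 : G.Adj v u := huv.symm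
  simp only [pivotEdge, localComp_adj, SimpleGraph.irrefl, G.adj_comm v u,
    G.adj_comm y u, G.adj_comm y v]
  by_cases h3 : G.Adj u y <;> by_cases h4 : G.Adj v y <;>
    simp [huv, h1, h1.symm, hyu, hyv, hyu.symm, hyv.symm, h3, h4]

lemma pivot_adj_v {G : SimpleGraph V} {u v : V} (huv : G.Adj u v) (y : V)
    (hyu : y ≠ u) (hyv : y ≠ v) :
    (pivotEdge G u v).Adj v y ↔ G.Adj u y := by
  have h1 : u ≠ v := huv.ne
  have h2 : G.Adj v u := huv.symm
  simp only [pivotEdge, localComp_adj, SimpleGraph.irrefl, G.adj_comm v u,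
    G.adj_comm y u, G.adj_comm y v]
  by_cases h3 : G.Adj u y <;> by_cases h4 : G.Adj v y <;>
    simp [huv, h1, h1.symm, hyu, hyv, hyu.symm, hyv.symm, h3, h4]

lemma pivot_adj_xy {G : SimpleGraph V} {u v : V} (huv : G.Adj u v) {x y : V}
    (hxu : x ≠ u) (hxv : x ≠ v) (hyu : y ≠ u) (hyv : y ≠ v) :
    (pivotEdge G u v).Adj x y ↔ x ≠ y ∧
      ((G.Adj x y ∧ ¬ Tog G u v x y) ∨ (¬ G.Adj x y ∧ Tog G u v x y)) := by
  have h1 : u ≠ v := huv.ne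
  have h2 : G.Adj v u := huv.symm
  by_cases hxy : x = y
  · subst hxy; simp
  simp only [pivotEdge, localComp_adj, SimpleGraph.irrefl, Tog, G.adj_comm v u,
    G.adj_comm x u, G.adj_comm x v, G.adj_comm y u, G.adj_comm y v, G.adj_comm y x]
  by_cases h3 : G.Adj u x <;> by_cases h4 : G.Adj v x <;>
    by_cases h5 : G.Adj u y <;> by_cases h6 : G.Adj v y <;>
    by_cases h7 : G.Adj x y <;>
    simp [huv, h1, h1.symm, hxu, hxv, hyu, hyv, hxu.symm, hxv.symm, hyu.symm, hyv.symm,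
      hxy, Ne.symm hxy, h3, h4, h5, h6, h7]

lemma pivot_comm {G : SimpleGraph V} {u v : V} (huv : G.Adj u v) :
    pivotEdge G u v = pivotEdge G v u := by
  have h1 : u ≠ v := huv.ne
  ext x y
  by_cases hxu : x = u
  · by_cases hyv : y = v
    · rw [hxu, hyv]
      simp only [pivot_adj_uv huv, true_iff]
      exact ((pivotEdge G v u).adj_comm v u).mp (pivot_adj_uv huv.symm)
    · by_cases hyu : y = u
      · rw [hxu, hyu]; simp
      · rw [hxu, pivot_adj_u huv y hyu hyv, pivot_adj_v huv.symm y hyv hyu]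
  · by_cases hxv : x = v
    · by_cases hyu : y = u
      · rw [hxv, hyu]
        simp only [(pivotEdge G u v).adj_comm v u, pivot_adj_uv huv, true_iff]
        exact pivot_adj_uv huv.symm
      · by_cases hyv : y = v
        · rw [hxv, hyv]; simp
        · rw [hxv, pivot_adj_v huv y hyu hyv, pivot_adj_u huv.symm y hyv hyu]
    · by_cases hyu : y = u
      · rw [hyu, (pivotEdge G u v).adj_comm x u, (pivotEdge G v u).adj_comm x u,
          pivot_adj_u huv x hxu hxv, pivot_adj_v huv.symm x hxv hxu]
      · by_cases hyv : y = v
        · rw [hyv, (pivotEdge G u v).adj_comm x v, (pivotEdge G v u).adj_comm x v,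
            pivot_adj_v huv x hxu hxv, pivot_adj_u huv.symm x hxv hxu]
        · rw [pivot_adj_xy huv hxu hxv hyu hyv, pivot_adj_xy huv.symm hxv hxu hyv hyu]
          unfold Tog
          tauto

lemma caseB {G : SimpleGraph V} {core : Set V} {r : V → V → Prop}
    (hrefl : ∀ x ∈ core, r x x) (hsymm : ∀ x y, r x y → r y x)
    (htrans : ∀ x y z, r x y → r y z → r x z)
    (hcore : ∀ x y, r x y → x ∈ core ∧ y ∈ core)
    (hadj : ∀ x ∈ core, ∀ y ∈ core, (G.Adj x y ↔ ¬ r x y))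
    (hleaf : ∀ w, w ∉ core → ∃ z ∈ core, (∀ t, G.Adj w t ↔ t = z) ∧ (∀ t, r z t → t = z))
    {u v : V} (huv : G.Adj u v) (hu : u ∈ core) (hv : v ∉ core) :
    IsLeafAttachedCMP (pivotEdge G u v) := by
  classical
  have hvu : v ≠ u := fun h => hv (h ▸ hu)
  obtain ⟨z0, hz0, hz0adj, hz0sing⟩ := hleaf v hv
  have huz : u = z0 := (hz0adj u).mp huv.symm
  have hvadj : ∀ t, G.Adj v t ↔ t = u := fun t => (hz0adj t).trans (by rw [huz])
  have husing : ∀ t, r u t → t = u := fun t ht => by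
    rw [huz]; exact hz0sing t (by rwa [← huz])
  clear hz0adj hz0sing hz0 huz
  have hAdjU : ∀ x ∈ core, x ≠ u → G.Adj u x := fun x hx hxu =>
    (hadj u hu x hx).mpr (fun hr => hxu (husing x hr))
  have hNAdjV : ∀ t, t ≠ u → ¬ G.Adj v t := fun t ht h => ht ((hvadj t).mp h)
  refine ⟨{x | (x ∈ core ∧ x ≠ u) ∨ x = v},
    fun x y => (r x y ∧ x ≠ u ∧ y ≠ u) ∨ (x = v ∧ y = v), ?_, ?_, ?_, ?_, ?_, ?_⟩
  · rintro x (⟨hx1, hx2⟩ | hx)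
    · exact Or.inl ⟨hrefl x hx1, hx2, hx2⟩
    · exact Or.inr ⟨hx, hx⟩
  · tauto
  · rintro x y w (⟨h1, h2, h3⟩ | ⟨h1, h2⟩) (⟨g1, g2, g3⟩ | ⟨g1, g2⟩)
    · exact Or.inl ⟨htrans _ _ _ h1 g1, h2, g3⟩
    · exact absurd (g1 ▸ (hcore _ _ h1).2) hv
    · exact absurd (h2 ▸ (hcore _ _ g1).1) hv
    · exact Or.inr ⟨h1, g2⟩
  · rintro x y (⟨h1, h2, h3⟩ | ⟨h1, h2⟩)
    · exact ⟨Or.inl ⟨(hcore _ _ h1).1, h2⟩, Or.inl ⟨(hcore _ _ h1).2, h3⟩⟩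
    · exact ⟨Or.inr h1, Or.inr h2⟩
  · rintro x (⟨hx1, hx2⟩ | hxv) y (⟨hy1, hy2⟩ | hyv)
    · -- both in core \ {u}
      have hxv : x ≠ v := fun h => hv (h ▸ hx1)
      have hyv : y ≠ v := fun h => hv (h ▸ hy1)
      rw [pivot_adj_xy huv hx2 hxv hy2 hyv]
      have hT : ¬ Tog G u v x y := by
        simp [Tog, hAdjU x hx1 hx2, hAdjU y hy1 hy2, hNAdjV x hx2, hNAdjV y hy2]
      by_cases hxy : x = y
      · simp [hxy, hrefl y hy1, hy2]
      · have hA := hadj x hx1 y hy1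
        constructor
        · rintro ⟨-, H⟩
          rcases H with ⟨H1, -⟩ | ⟨-, H2⟩
          · rintro (⟨h1, -, -⟩ | ⟨h1, -⟩)
            · exact (hA.mp H1) h1
            · exact hxv h1
          · exact absurd H2 hT
        · intro H
          refine ⟨hxy, Or.inl ⟨?_, hT⟩⟩
          exact hA.mpr (fun hr => H (Or.inl ⟨hr, hx2, hy2⟩))
    · -- x in core, y = v
      have hxv : x ≠ v := fun h => hv (h ▸ hx1)
      rw [hyv, (pivotEdge G u v).adj_comm x v, pivot_adj_v huv x hx2 hxv]
      have h3 : ¬ (r x v ∧ x ≠ u ∧ v ≠ u) := fun h => hv (hcore _ _ h.1).2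
      have h2 : G.Adj u x := hAdjU x hx1 hx2
      tauto
    · -- x = v, y in core
      have hyv : y ≠ v := fun h => hv (h ▸ hy1)
      rw [hxv, pivot_adj_v huv y hy2 hyv]
      have h3 : ¬ (r v y ∧ v ≠ u ∧ y ≠ u) := fun h => hv (hcore _ _ h.1).1
      have h2 : G.Adj u y := hAdjU y hy1 hy2
      have h4 : v ≠ y := fun h => hv (h ▸ hy1)
      tauto
    · -- x = y = v
      rw [hxv, hyv]
      simp
  · -- leaves
    intro x hx
    simp only [Set.mem_setOf_eq, not_or, not_and, not_not] at hx
    obtain ⟨hx1, hx2⟩ := hx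
    by_cases hxu : x = u
    · refine ⟨v, Or.inr rfl, ?_, ?_⟩
      · intro w
        rw [hxu]
        by_cases hwv : w = v
        · rw [hwv]; simp [pivot_adj_uv huv]
        · by_cases hwu : w = u
          · rw [hwu]; simp [hwu ▸ hwv]
          · rw [pivot_adj_u huv w hwu hwv]
            simp [hNAdjV w hwu, hwv]
      · rintro w (⟨h1, -, -⟩ | ⟨-, h2⟩)
        · exact absurd (hcore _ _ h1).1 hv
        · exact h2
    · have hxc : x ∉ core := fun h => hxu (hx1 h)
      obtain ⟨z, hzc, hza, hzs⟩ := hleaf x hxc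
      by_cases hzu : z = u
      · have hxadj : ∀ t, G.Adj x t ↔ t = u := fun t => (hza t).trans (by rw [hzu])
        have hAux : G.Adj u x := ((hxadj u).mpr rfl).symm
        have hnvx : ¬ G.Adj v x := hNAdjV x hxu
        refine ⟨v, Or.inr rfl, ?_, ?_⟩
        · intro w
          by_cases hwv : w = v
          · rw [hwv]
            rw [(pivotEdge G u v).adj_comm x v, pivot_adj_v huv x hxu hx2]
            simp [hAux]
          · by_cases hwu : w = u
            · rw [hwu]
              rw [(pivotEdge G u v).adj_comm x u, pivot_adj_u huv x hxu hx2]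
              simp [hnvx, huv.ne]
            · by_cases hwx : w = x
              · rw [hwx]; simp [hwx ▸ hwv]
              · rw [pivot_adj_xy huv hxu hx2 hwu hwv]
                have hT : ¬ Tog G u v x w := by
                  rintro ⟨-, h2, h3⟩
                  rcases h2 with h2 | h2
                  · rcases h3 with h3 | h3
                    · exact h3 ⟨fun _ => h2, fun _ => hAux⟩
                    · exact h3 ⟨fun hh => absurd hh hnvx, fun hh => absurd hh (hNAdjV w hwu)⟩
                  · exact hNAdjV w hwu h2
                have hnxw : ¬ G.Adj x w := fun h => hwu ((hxadj w).mp h)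
                simp [hT, hnxw, hwv]
        · rintro w (⟨h1, -, -⟩ | ⟨-, h2⟩)
          · exact absurd (hcore _ _ h1).1 hv
          · exact h2
      · -- z stays the attachment
        have hzv : z ≠ v := fun h => hv (h ▸ hzc)
        have hxz : x ≠ z := fun h => hxc (h ▸ hzc)
        have hnxu : ¬ G.Adj x u := fun h => hzu (((hza u).mp h).symm)
        have hnux : ¬ G.Adj u x := fun h => hnxu h.symm
        have hnvx : ¬ G.Adj v x := hNAdjV x hxu
        refine ⟨z, Or.inl ⟨hzc, hzu⟩, ?_, ?_⟩
        · intro w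
          by_cases hwu : w = u
          · have huz2 : ¬ (u = z) := fun h => hzu h.symm
            rw [hwu, (pivotEdge G u v).adj_comm x u, pivot_adj_u huv x hxu hx2]
            simp [hnvx, huz2]
          · by_cases hwv : w = v
            · have hvz2 : ¬ (v = z) := fun h => hzv h.symm
              rw [hwv, (pivotEdge G u v).adj_comm x v, pivot_adj_v huv x hxu hx2]
              simp [hnux, hvz2]
            · by_cases hwx : w = x
              · rw [hwx]; simp [fun h : x = z => hxz h]
              · rw [pivot_adj_xy huv hxu hx2 hwu hwv]
                have hT : ¬ Tog G u v x w := by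
                  rintro ⟨h1, -, -⟩
                  rcases h1 with h1 | h1
                  · exact hnux h1
                  · exact hnvx h1
                constructor
                · rintro ⟨-, H⟩
                  rcases H with ⟨H1, -⟩ | ⟨-, H2⟩
                  · exact (hza w).mp H1
                  · exact absurd H2 hT
                · intro h
                  exact ⟨fun he => hxz (he.trans h), Or.inl ⟨(hza w).mpr h, hT⟩⟩
        · rintro w (⟨h1, -, -⟩ | ⟨h1, -⟩)
          · exact hzs w h1
          · exact absurd (h1 ▸ hzc) hv

def lacQ (G : SimpleGraph V) (core : Set V) (u : V) (x : V) : Prop :=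
  x = u ∨ (x ∉ core ∧ G.Adj x u)

def lacR (G : SimpleGraph V) (core : Set V) (r : V → V → Prop) (u v : V) (x y : V) : Prop :=
  (r x y ∧ ¬ r u x ∧ ¬ r v x) ∨ (lacQ G core u x ∧ lacQ G core u y) ∨
    (lacQ G core v x ∧ lacQ G core v y)

lemma leaf_at {G : SimpleGraph V} {core : Set V} {r : V → V → Prop}
    (hleaf : ∀ w, w ∉ core → ∃ z ∈ core, (∀ t, G.Adj w t ↔ t = z) ∧ (∀ t, r z t → t = z))
    {x t : V} (hx : x ∉ core) (ht : G.Adj x t) :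
    (∀ w, G.Adj x w ↔ w = t) ∧ (∀ w, r t w → w = t) ∧ t ∈ core := by
  obtain ⟨z, hz, hza, hzs⟩ := hleaf x hx
  have htz : t = z := (hza t).mp ht
  refine ⟨fun w => (hza w).trans (by rw [htz]), fun w hw => ?_, by rw [htz]; exact hz⟩
  rw [htz]; exact hzs w (by rwa [← htz])

lemma caseA_leafcore {G : SimpleGraph V} {core : Set V} {r : V → V → Prop}
    (hrefl : ∀ x ∈ core, r x x) (hsymm : ∀ x y, r x y → r y x)
    (htrans : ∀ x y z, r x y → r y z → r x z)
    (hcore : ∀ x y, r x y → x ∈ core ∧ y ∈ core)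
    (hadj : ∀ x ∈ core, ∀ y ∈ core, (G.Adj x y ↔ ¬ r x y))
    (hleaf : ∀ w, w ∉ core → ∃ z ∈ core, (∀ t, G.Adj w t ↔ t = z) ∧ (∀ t, r z t → t = z))
    {u v : V} (huv : G.Adj u v) (hu : u ∈ core) (hv : v ∈ core)
    {x : V} (hx : x ∈ core) (hrx : r u x) (hxu : x ≠ u) :
    (∀ w, (pivotEdge G u v).Adj x w ↔ w = u) ∧ (∀ w, lacR G core r u v u w → w = u) := by
  have hne : u ≠ v := huv.ne
  have hruv : ¬ r u v := (hadj u hu v hv).mp huv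
  have hrvx : ¬ r v x := fun h => hruv (htrans u x v hrx (hsymm _ _ h))
  have naux : ¬ G.Adj u x := fun h => (hadj u hu x hx).mp h hrx
  have avx : G.Adj v x := (hadj v hv x hx).mpr hrvx
  have xnv : x ≠ v := fun h => hrvx (by rw [h]; exact hrefl v hv)
  have hNoLu : ∀ w, w ∉ core → ¬ G.Adj w u := by
    intro w hw h
    obtain ⟨-, hs, -⟩ := leaf_at hleaf hw h
    exact hxu (hs x hrx)
  constructor
  · intro w
    by_cases hwu : w = u
    · rw [hwu]
      exact iff_of_true ((pivot_adj_u huv x hxu xnv).mpr avx).symm rfl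
    by_cases hwv : w = v
    · rw [hwv]
      refine iff_of_false (fun h => naux ((pivot_adj_v huv x hxu xnv).mp h.symm))
        (fun h => hne h.symm)
    by_cases hwx : w = x
    · rw [hwx]
      exact iff_of_false (SimpleGraph.irrefl _) hxu
    rw [pivot_adj_xy huv hxu xnv hwu hwv]
    refine iff_of_false ?_ hwu
    by_cases hwc : w ∈ core
    · by_cases hruw : r u w
      · have hrvw : ¬ r v w := fun h => hruv (htrans u w v hruw (hsymm _ _ h))
        have hrxw : r x w := htrans x u w (hsymm _ _ hrx) hruw
        have hnadj : ¬ G.Adj x w := fun h => (hadj x hx w hwc).mp h hrxw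
        have nauw : ¬ G.Adj u w := fun h => (hadj u hu w hwc).mp h hruw
        have avw : G.Adj v w := (hadj v hv w hwc).mpr hrvw
        have hT : ¬ Tog G u v x w := by
          rintro ⟨-, -, h | h⟩
          · exact h (iff_of_false naux nauw)
          · exact h (iff_of_true avx avw)
        rintro ⟨-, ⟨h, -⟩ | ⟨-, h⟩⟩
        exacts [hnadj h, hT h]
      by_cases hrvw : r v w
      · have auw : G.Adj u w := (hadj u hu w hwc).mpr hruw
        have navw : ¬ G.Adj v w := fun h => (hadj v hv w hwc).mp h hrvw
        have hnrxw : ¬ r x w := fun h => hruw (htrans u x w hrx h)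
        have hadjxw : G.Adj x w := (hadj x hx w hwc).mpr hnrxw
        have hT : Tog G u v x w :=
          ⟨Or.inr avx, Or.inl auw, Or.inl (fun h => naux (h.mpr auw))⟩
        rintro ⟨-, ⟨-, h⟩ | ⟨h, -⟩⟩
        exacts [h hT, h hadjxw]
      · have auw : G.Adj u w := (hadj u hu w hwc).mpr hruw
        have avw : G.Adj v w := (hadj v hv w hwc).mpr hrvw
        have hnrxw : ¬ r x w := fun h => hruw (htrans u x w hrx h)
        have hadjxw : G.Adj x w := (hadj x hx w hwc).mpr hnrxw
        have hT : Tog G u v x w :=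
          ⟨Or.inr avx, Or.inl auw, Or.inl (fun h => naux (h.mpr auw))⟩
        rintro ⟨-, ⟨-, h⟩ | ⟨h, -⟩⟩
        exacts [h hT, h hadjxw]
    · have hnwu : ¬ G.Adj w u := hNoLu w hwc
      by_cases hwv2 : G.Adj w v
      · obtain ⟨ha, -, -⟩ := leaf_at hleaf hwc hwv2
        have hnadj : ¬ G.Adj x w := fun h => xnv ((ha x).mp h.symm)
        have hT : ¬ Tog G u v x w := by
          rintro ⟨-, -, h | h⟩
          · exact h (iff_of_false naux (fun h' => hnwu h'.symm))
          · exact h (iff_of_true avx hwv2.symm)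
        rintro ⟨-, ⟨h, -⟩ | ⟨-, h⟩⟩
        exacts [hnadj h, hT h]
      · have hT : ¬ Tog G u v x w := by
          rintro ⟨-, h, -⟩
          rcases h with h | h
          · exact hnwu h.symm
          · exact hwv2 h.symm
        have hnadj : ¬ G.Adj x w := by
          intro h
          obtain ⟨-, hs, -⟩ := leaf_at hleaf hwc h.symm
          exact hxu ((hs u (hsymm _ _ hrx)).symm ▸ rfl : x = u)
        rintro ⟨-, ⟨h, -⟩ | ⟨-, h⟩⟩
        exacts [hnadj h, hT h]
  · rintro w (⟨-, g2, -⟩ | ⟨-, g⟩ | ⟨g, -⟩)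
    · exact absurd (hrefl u hu) g2
    · rcases g with g | g
      · exact g
      · exact absurd g.2 (hNoLu w g.1)
    · rcases g with g | g
      · exact absurd g hne
      · exact absurd hu g.1


lemma lacR_swap {G : SimpleGraph V} {core : Set V} {r : V → V → Prop} {u v : V} :
    ∀ a b, lacR G core r u v a b ↔ lacR G core r v u a b := by
  intro a b
  unfold lacR
  tauto

lemma caseA {G : SimpleGraph V} {core : Set V} {r : V → V → Prop}
    (hrefl : ∀ x ∈ core, r x x) (hsymm : ∀ x y, r x y → r y x)
    (htrans : ∀ x y z, r x y → r y z → r x z)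
    (hcore : ∀ x y, r x y → x ∈ core ∧ y ∈ core)
    (hadj : ∀ x ∈ core, ∀ y ∈ core, (G.Adj x y ↔ ¬ r x y))
    (hleaf : ∀ w, w ∉ core → ∃ z ∈ core, (∀ t, G.Adj w t ↔ t = z) ∧ (∀ t, r z t → t = z))
    {u v : V} (huv : G.Adj u v) (hu : u ∈ core) (hv : v ∈ core) :
    IsLeafAttachedCMP (pivotEdge G u v) := by
  classical
  have hne : u ≠ v := huv.ne
  have hruv : ¬ r u v := (hadj u hu v hv).mp huv
  have hrvu : ¬ r v u := fun h => hruv (hsymm _ _ h)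
  have hfA : ∀ x, x ∈ core → ¬ r u x → ¬ r v x →
      G.Adj u x ∧ G.Adj v x ∧ x ≠ u ∧ x ≠ v := by
    intro x hx h1 h2
    exact ⟨(hadj u hu x hx).mpr h1, (hadj v hv x hx).mpr h2,
      fun h => h1 (by rw [h]; exact hrefl u hu), fun h => h2 (by rw [h]; exact hrefl v hv)⟩
  have hfLu : ∀ x, x ∉ core → G.Adj x u →
      G.Adj u x ∧ ¬ G.Adj v x ∧ x ≠ u ∧ x ≠ v ∧ (∀ w, G.Adj x w ↔ w = u) ∧
        (∀ w, r u w → w = u) := by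
    intro x hx hxu
    obtain ⟨ha, hs, -⟩ := leaf_at hleaf hx hxu
    exact ⟨hxu.symm, fun h => hne ((ha v).mp h.symm).symm, fun h => hx (h ▸ hu),
      fun h => hx (h ▸ hv), ha, hs⟩
  have hfLv : ∀ x, x ∉ core → G.Adj x v →
      G.Adj v x ∧ ¬ G.Adj u x ∧ x ≠ u ∧ x ≠ v ∧ (∀ w, G.Adj x w ↔ w = v) ∧
        (∀ w, r v w → w = v) := by
    intro x hx hxv
    obtain ⟨ha, hs, -⟩ := leaf_at hleaf hx hxv
    exact ⟨hxv.symm, fun h => hne ((ha u).mp h.symm), fun h => hx (h ▸ hu),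
      fun h => hx (h ▸ hv), ha, hs⟩
  have hQuA : ∀ x, x ∈ core → ¬ r u x → ¬ lacQ G core u x := by
    rintro x hx h1 (h | ⟨h2, -⟩)
    · exact h1 (by rw [h]; exact hrefl u hu)
    · exact h2 hx
  have hQvA : ∀ x, x ∈ core → ¬ r v x → ¬ lacQ G core v x := by
    rintro x hx h1 (h | ⟨h2, -⟩)
    · exact h1 (by rw [h]; exact hrefl v hv)
    · exact h2 hx
  have hQuLv : ∀ x, x ∉ core → G.Adj x v → ¬ lacQ G core u x := by
    rintro x hx hxv (h | ⟨-, h2⟩)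
    · exact hx (h ▸ hu)
    · exact hne (((hfLv x hx hxv).2.2.2.2.1 u).mp h2)
  have hQvLu : ∀ x, x ∉ core → G.Adj x u → ¬ lacQ G core v x := by
    rintro x hx hxu (h | ⟨-, h2⟩)
    · exact hx (h ▸ hv)
    · exact hne (((hfLu x hx hxu).2.2.2.2.1 v).mp h2).symm
  have hQuV : ¬ lacQ G core u v := by
    rintro (h | ⟨h2, -⟩)
    · exact hne h.symm
    · exact h2 hv
  have hQvU : ¬ lacQ G core v u := by
    rintro (h | ⟨h2, -⟩)
    · exact hne h
    · exact h2 hu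
  have hQuv : ∀ y, lacQ G core u y → lacQ G core v y → False := by
    rintro y (h | ⟨h1, h2⟩) (g | ⟨g1, g2⟩)
    · exact hne (h.symm.trans g)
    · exact g1 (h ▸ hu)
    · exact h1 (g ▸ hv)
    · exact hne (((hfLu y h1 h2).2.2.2.2.1 v).mp g2).symm
  have hruu : r u u := hrefl u hu
  have hrvv : r v v := hrefl v hv
  have hR'symm : ∀ a b, lacR G core r u v a b → lacR G core r v u b a := by
    rintro a b (⟨h1, h2, h3⟩ | ⟨h1, h2⟩ | ⟨h1, h2⟩)
    · exact Or.inl ⟨hsymm _ _ h1, fun h => h3 (htrans _ _ _ h (hsymm _ _ h1)),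
        fun h => h2 (htrans _ _ _ h (hsymm _ _ h1))⟩
    · exact Or.inr (Or.inr ⟨h2, h1⟩)
    · exact Or.inr (Or.inl ⟨h2, h1⟩)
  have hR'symm' : ∀ a b, lacR G core r u v a b → lacR G core r u v b a := by
    intro a b h
    exact (lacR_swap b a).mpr (hR'symm a b h)
  have hswap : ∀ a b, ((pivotEdge G u v).Adj a b ↔ ¬ lacR G core r u v a b) →
      ((pivotEdge G u v).Adj b a ↔ ¬ lacR G core r u v b a) := by
    intro a b h
    rw [(pivotEdge G u v).adj_comm b a, h]
    exact not_congr ⟨hR'symm' a b, hR'symm' b a⟩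
  have cuv : (pivotEdge G u v).Adj u v ↔ ¬ lacR G core r u v u v := by
    refine iff_of_true (pivot_adj_uv huv) ?_
    rintro (⟨-, h2, -⟩ | ⟨-, h⟩ | ⟨h, -⟩)
    exacts [h2 hruu, hQuV h, hQvU h]
  have cuA : ∀ y, y ∈ core → ¬ r u y → ¬ r v y →
      ((pivotEdge G u v).Adj u y ↔ ¬ lacR G core r u v u y) := by
    intro y hy h1 h2
    obtain ⟨auy, avy, ynu, ynv⟩ := hfA y hy h1 h2
    rw [pivot_adj_u huv y ynu ynv]
    refine iff_of_true avy ?_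
    rintro (⟨-, g2, -⟩ | ⟨-, g⟩ | ⟨g, -⟩)
    exacts [g2 hruu, hQuA y hy h1 g, hQvU g]
  have cuLu : ∀ y, y ∉ core → G.Adj y u →
      ((pivotEdge G u v).Adj u y ↔ ¬ lacR G core r u v u y) := by
    intro y hy hyu
    obtain ⟨auy, navy, ynu, ynv, -, -⟩ := hfLu y hy hyu
    rw [pivot_adj_u huv y ynu ynv]
    exact iff_of_false navy
      (not_not_intro (Or.inr (Or.inl ⟨Or.inl rfl, Or.inr ⟨hy, hyu⟩⟩)))
  have cuLv : ∀ y, y ∉ core → G.Adj y v →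
      ((pivotEdge G u v).Adj u y ↔ ¬ lacR G core r u v u y) := by
    intro y hy hyv
    obtain ⟨avy, nauy, ynu, ynv, -, -⟩ := hfLv y hy hyv
    rw [pivot_adj_u huv y ynu ynv]
    refine iff_of_true avy ?_
    rintro (⟨-, g2, -⟩ | ⟨-, g⟩ | ⟨g, -⟩)
    exacts [g2 hruu, hQuLv y hy hyv g, hQvU g]
  have cvA : ∀ y, y ∈ core → ¬ r u y → ¬ r v y →
      ((pivotEdge G u v).Adj v y ↔ ¬ lacR G core r u v v y) := by
    intro y hy h1 h2
    obtain ⟨auy, avy, ynu, ynv⟩ := hfA y hy h1 h2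
    rw [pivot_adj_v huv y ynu ynv]
    refine iff_of_true auy ?_
    rintro (⟨-, -, g3⟩ | ⟨g, -⟩ | ⟨-, g⟩)
    exacts [g3 hrvv, hQuV g, hQvA y hy h2 g]
  have cvLu : ∀ y, y ∉ core → G.Adj y u →
      ((pivotEdge G u v).Adj v y ↔ ¬ lacR G core r u v v y) := by
    intro y hy hyu
    obtain ⟨auy, navy, ynu, ynv, -, -⟩ := hfLu y hy hyu
    rw [pivot_adj_v huv y ynu ynv]
    refine iff_of_true auy ?_
    rintro (⟨-, -, g3⟩ | ⟨g, -⟩ | ⟨-, g⟩)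
    exacts [g3 hrvv, hQuV g, hQvLu y hy hyu g]
  have cvLv : ∀ y, y ∉ core → G.Adj y v →
      ((pivotEdge G u v).Adj v y ↔ ¬ lacR G core r u v v y) := by
    intro y hy hyv
    obtain ⟨avy, nauy, ynu, ynv, -, -⟩ := hfLv y hy hyv
    rw [pivot_adj_v huv y ynu ynv]
    exact iff_of_false nauy
      (not_not_intro (Or.inr (Or.inr ⟨Or.inl rfl, Or.inr ⟨hy, hyv⟩⟩)))
  have cAA : ∀ x y, x ∈ core → ¬ r u x → ¬ r v x → y ∈ core → ¬ r u y → ¬ r v y →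
      x ≠ y → ((pivotEdge G u v).Adj x y ↔ ¬ lacR G core r u v x y) := by
    intro x y hx1 hx2 hx3 hy1 hy2 hy3 hxy
    obtain ⟨aux, avx, xnu, xnv⟩ := hfA x hx1 hx2 hx3
    obtain ⟨auy, avy, ynu, ynv⟩ := hfA y hy1 hy2 hy3
    rw [pivot_adj_xy huv xnu xnv ynu ynv]
    have hT : ¬ Tog G u v x y := by
      rintro ⟨-, -, h | h⟩
      exacts [h (iff_of_true aux auy), h (iff_of_true avx avy)]
    have hAdj := hadj x hx1 y hy1
    constructor
    · rintro ⟨-, ⟨h1, -⟩ | ⟨-, h2⟩⟩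
      · rintro (⟨g1, -, -⟩ | ⟨g, -⟩ | ⟨g, -⟩)
        exacts [hAdj.mp h1 g1, hQuA x hx1 hx2 g, hQvA x hx1 hx3 g]
      · exact absurd h2 hT
    · intro H
      exact ⟨hxy, Or.inl ⟨hAdj.mpr (fun hr => H (Or.inl ⟨hr, hx2, hx3⟩)), hT⟩⟩
  have cALu : ∀ x y, x ∈ core → ¬ r u x → ¬ r v x → y ∉ core → G.Adj y u →
      ((pivotEdge G u v).Adj x y ↔ ¬ lacR G core r u v x y) := by
    intro x y hx1 hx2 hx3 hy1 hy2
    obtain ⟨aux, avx, xnu, xnv⟩ := hfA x hx1 hx2 hx3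
    obtain ⟨auy, navy, ynu, ynv, ha, -⟩ := hfLu y hy1 hy2
    rw [pivot_adj_xy huv xnu xnv ynu ynv]
    have hT : Tog G u v x y :=
      ⟨Or.inl aux, Or.inl auy, Or.inr (fun h => navy (h.mp avx))⟩
    have hnadj : ¬ G.Adj x y := fun h => xnu ((ha x).mp h.symm)
    refine iff_of_true ⟨fun h => hy1 (h ▸ hx1), Or.inr ⟨hnadj, hT⟩⟩ ?_
    rintro (⟨g1, -, -⟩ | ⟨g, -⟩ | ⟨g, -⟩)
    exacts [hy1 (hcore _ _ g1).2, hQuA x hx1 hx2 g, hQvA x hx1 hx3 g]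
  have cALv : ∀ x y, x ∈ core → ¬ r u x → ¬ r v x → y ∉ core → G.Adj y v →
      ((pivotEdge G u v).Adj x y ↔ ¬ lacR G core r u v x y) := by
    intro x y hx1 hx2 hx3 hy1 hy2
    obtain ⟨aux, avx, xnu, xnv⟩ := hfA x hx1 hx2 hx3
    obtain ⟨avy, nauy, ynu, ynv, ha, -⟩ := hfLv y hy1 hy2
    rw [pivot_adj_xy huv xnu xnv ynu ynv]
    have hT : Tog G u v x y :=
      ⟨Or.inl aux, Or.inr avy, Or.inl (fun h => nauy (h.mp aux))⟩
    have hnadj : ¬ G.Adj x y := fun h => xnv ((ha x).mp h.symm)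
    refine iff_of_true ⟨fun h => hy1 (h ▸ hx1), Or.inr ⟨hnadj, hT⟩⟩ ?_
    rintro (⟨g1, -, -⟩ | ⟨g, -⟩ | ⟨g, -⟩)
    exacts [hy1 (hcore _ _ g1).2, hQuA x hx1 hx2 g, hQvA x hx1 hx3 g]
  have cLuLu : ∀ x y, x ∉ core → G.Adj x u → y ∉ core → G.Adj y u → x ≠ y →
      ((pivotEdge G u v).Adj x y ↔ ¬ lacR G core r u v x y) := by
    intro x y hx1 hx2 hy1 hy2 hxy
    obtain ⟨aux, navx, xnu, xnv, hax, -⟩ := hfLu x hx1 hx2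
    obtain ⟨auy, navy, ynu, ynv, -, -⟩ := hfLu y hy1 hy2
    rw [pivot_adj_xy huv xnu xnv ynu ynv]
    have hT : ¬ Tog G u v x y := by
      rintro ⟨-, -, h | h⟩
      exacts [h (iff_of_true aux auy), h (iff_of_false navx navy)]
    have hnadj : ¬ G.Adj x y := fun h => ynu ((hax y).mp h)
    refine iff_of_false ?_ (not_not_intro
      (Or.inr (Or.inl ⟨Or.inr ⟨hx1, hx2⟩, Or.inr ⟨hy1, hy2⟩⟩)))
    rintro ⟨-, ⟨h, -⟩ | ⟨-, h⟩⟩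
    exacts [hnadj h, hT h]
  have cLvLv : ∀ x y, x ∉ core → G.Adj x v → y ∉ core → G.Adj y v → x ≠ y →
      ((pivotEdge G u v).Adj x y ↔ ¬ lacR G core r u v x y) := by
    intro x y hx1 hx2 hy1 hy2 hxy
    obtain ⟨avx, naux, xnu, xnv, hax, -⟩ := hfLv x hx1 hx2
    obtain ⟨avy, nauy, ynu, ynv, -, -⟩ := hfLv y hy1 hy2
    rw [pivot_adj_xy huv xnu xnv ynu ynv]
    have hT : ¬ Tog G u v x y := by
      rintro ⟨-, -, h | h⟩
      exacts [h (iff_of_false naux nauy), h (iff_of_true avx avy)]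
    have hnadj : ¬ G.Adj x y := fun h => ynv ((hax y).mp h)
    refine iff_of_false ?_ (not_not_intro
      (Or.inr (Or.inr ⟨Or.inr ⟨hx1, hx2⟩, Or.inr ⟨hy1, hy2⟩⟩)))
    rintro ⟨-, ⟨h, -⟩ | ⟨-, h⟩⟩
    exacts [hnadj h, hT h]
  have cLuLv : ∀ x y, x ∉ core → G.Adj x u → y ∉ core → G.Adj y v →
      ((pivotEdge G u v).Adj x y ↔ ¬ lacR G core r u v x y) := by
    intro x y hx1 hx2 hy1 hy2
    obtain ⟨aux, navx, xnu, xnv, hax, -⟩ := hfLu x hx1 hx2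
    obtain ⟨avy, nauy, ynu, ynv, -, -⟩ := hfLv y hy1 hy2
    rw [pivot_adj_xy huv xnu xnv ynu ynv]
    have hT : Tog G u v x y :=
      ⟨Or.inl aux, Or.inr avy, Or.inl (fun h => nauy (h.mp aux))⟩
    have hnadj : ¬ G.Adj x y := fun h => ynu ((hax y).mp h)
    have hxy : x ≠ y := fun h => nauy (h ▸ aux)
    refine iff_of_true ⟨hxy, Or.inr ⟨hnadj, hT⟩⟩ ?_
    rintro (⟨g1, -, -⟩ | ⟨-, g⟩ | ⟨g, -⟩)
    exacts [hx1 (hcore _ _ g1).1, hQuLv y hy1 hy2 g, hQvLu x hx1 hx2 g]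
  refine ⟨{x | (x ∈ core ∧ ¬ r u x ∧ ¬ r v x) ∨ lacQ G core u x ∨ lacQ G core v x},
    lacR G core r u v, ?_, ?_, ?_, ?_, ?_, ?_⟩
  · rintro x (⟨h1, h2, h3⟩ | h | h)
    · exact Or.inl ⟨hrefl x h1, h2, h3⟩
    · exact Or.inr (Or.inl ⟨h, h⟩)
    · exact Or.inr (Or.inr ⟨h, h⟩)
  · exact hR'symm'
  · rintro x y z (⟨h1, h2, h3⟩ | ⟨h1, h2⟩ | ⟨h1, h2⟩) (⟨g1, g2, g3⟩ | ⟨g1, g2⟩ | ⟨g1, g2⟩)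
    · exact Or.inl ⟨htrans _ _ _ h1 g1, h2, h3⟩
    · exact absurd g1 (hQuA y (hcore _ _ h1).2 (fun h => h2 (htrans _ _ _ h (hsymm _ _ h1))))
    · exact absurd g1 (hQvA y (hcore _ _ h1).2 (fun h => h3 (htrans _ _ _ h (hsymm _ _ h1))))
    · exact absurd h2 (hQuA y (hcore _ _ g1).1 g2)
    · exact Or.inr (Or.inl ⟨h1, g2⟩)
    · exact (hQuv y h2 g1).elim
    · exact absurd h2 (hQvA y (hcore _ _ g1).1 g3)
    · exact (hQuv y g1 h2).elim
    · exact Or.inr (Or.inr ⟨h1, g2⟩)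
  · rintro x y (⟨h1, h2, h3⟩ | ⟨h1, h2⟩ | ⟨h1, h2⟩)
    · exact ⟨Or.inl ⟨(hcore _ _ h1).1, h2, h3⟩,
        Or.inl ⟨(hcore _ _ h1).2, fun h => h2 (htrans _ _ _ h (hsymm _ _ h1)),
          fun h => h3 (htrans _ _ _ h (hsymm _ _ h1))⟩⟩
    · exact ⟨Or.inr (Or.inl h1), Or.inr (Or.inl h2)⟩
    · exact ⟨Or.inr (Or.inr h1), Or.inr (Or.inr h2)⟩
  · intro x hx y hy
    simp only [Set.mem_setOf_eq, lacQ] at hx hy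
    by_cases hxy : x = y
    · rw [hxy]
      refine iff_of_false (SimpleGraph.irrefl _) (not_not_intro ?_)
      rcases hy with ⟨h1, h2, h3⟩ | (h | ⟨h1, h2⟩) | (h | ⟨h1, h2⟩)
      · exact Or.inl ⟨hrefl y h1, h2, h3⟩
      · exact Or.inr (Or.inl ⟨Or.inl h, Or.inl h⟩)
      · exact Or.inr (Or.inl ⟨Or.inr ⟨h1, h2⟩, Or.inr ⟨h1, h2⟩⟩)
      · exact Or.inr (Or.inr ⟨Or.inl h, Or.inl h⟩)
      · exact Or.inr (Or.inr ⟨Or.inr ⟨h1, h2⟩, Or.inr ⟨h1, h2⟩⟩)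
    rcases hx with ⟨hx1, hx2, hx3⟩ | (hxu | ⟨hx1, hx2⟩) | (hxv | ⟨hx1, hx2⟩) <;>
      rcases hy with ⟨hy1, hy2, hy3⟩ | (hyu | ⟨hy1, hy2⟩) | (hyv | ⟨hy1, hy2⟩)
    · exact cAA x y hx1 hx2 hx3 hy1 hy2 hy3 hxy
    · rw [hyu]; exact hswap u x (cuA x hx1 hx2 hx3)
    · exact cALu x y hx1 hx2 hx3 hy1 hy2
    · rw [hyv]; exact hswap v x (cvA x hx1 hx2 hx3)
    · exact cALv x y hx1 hx2 hx3 hy1 hy2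
    · rw [hxu]; exact cuA y hy1 hy2 hy3
    · exact absurd (hxu.trans hyu.symm) hxy
    · rw [hxu]; exact cuLu y hy1 hy2
    · rw [hxu, hyv]; exact cuv
    · rw [hxu]; exact cuLv y hy1 hy2
    · exact hswap y x (cALu y x hy1 hy2 hy3 hx1 hx2)
    · rw [hyu]; exact hswap u x (cuLu x hx1 hx2)
    · exact cLuLu x y hx1 hx2 hy1 hy2 hxy
    · rw [hyv]; exact hswap v x (cvLu x hx1 hx2)
    · exact cLuLv x y hx1 hx2 hy1 hy2
    · rw [hxv]; exact cvA y hy1 hy2 hy3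
    · rw [hxv, hyu]; exact hswap u v cuv
    · rw [hxv]; exact cvLu y hy1 hy2
    · exact absurd (hxv.trans hyv.symm) hxy
    · rw [hxv]; exact cvLv y hy1 hy2
    · exact hswap y x (cALv y x hy1 hy2 hy3 hx1 hx2)
    · rw [hyu]; exact hswap u x (cuLv x hx1 hx2)
    · exact hswap y x (cLuLv y x hy1 hy2 hx1 hx2)
    · rw [hyv]; exact hswap v x (cvLv x hx1 hx2)
    · exact cLvLv x y hx1 hx2 hy1 hy2 hxy
  · intro x hx
    simp only [Set.mem_setOf_eq, lacQ, not_or] at hx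
    obtain ⟨hxA, ⟨hxu, hxLu⟩, ⟨hxv, hxLv⟩⟩ := hx
    by_cases hxc : x ∈ core
    · have hr : r u x ∨ r v x := by
        by_contra hcon
        push_neg at hcon
        exact hxA ⟨hxc, hcon.1, hcon.2⟩
      rcases hr with hr | hr
      · obtain ⟨hadj', hsing'⟩ :=
          caseA_leafcore hrefl hsymm htrans hcore hadj hleaf huv hu hv hxc hr hxu
        exact ⟨u, Or.inr (Or.inl (Or.inl rfl)), hadj', hsing'⟩
      · obtain ⟨hadj', hsing'⟩ :=
          caseA_leafcore hrefl hsymm htrans hcore hadj hleaf huv.symm hv hu hxc hr hxv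
        rw [pivot_comm huv]
        exact ⟨v, Or.inr (Or.inr (Or.inl rfl)), hadj',
          fun w hw => hsing' w ((lacR_swap v w).mp hw)⟩
    · have hnxu : ¬ G.Adj x u := fun h => hxLu ⟨hxc, h⟩
      have hnxv : ¬ G.Adj x v := fun h => hxLv ⟨hxc, h⟩
      obtain ⟨z, hz, hza, hzs⟩ := hleaf x hxc
      have haz : G.Adj x z := (hza z).mpr rfl
      have hznu : z ≠ u := fun h => hnxu (h ▸ haz)
      have hznv : z ≠ v := fun h => hnxv (h ▸ haz)
      have hnruz : ¬ r u z := fun h => hznu (hzs u (hsymm _ _ h)).symm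
      have hnrvz : ¬ r v z := fun h => hznv (hzs v (hsymm _ _ h)).symm
      refine ⟨z, Or.inl ⟨hz, hnruz, hnrvz⟩, ?_, ?_⟩
      · intro w
        by_cases hwu : w = u
        · rw [hwu, (pivotEdge G u v).adj_comm x u, pivot_adj_u huv x hxu hxv]
          exact iff_of_false (fun h => hnxv h.symm) (fun h => hznu h.symm)
        · by_cases hwv : w = v
          · rw [hwv, (pivotEdge G u v).adj_comm x v, pivot_adj_v huv x hxu hxv]
            exact iff_of_false (fun h => hnxu h.symm) (fun h => hznv h.symm)
          · by_cases hwx : w = x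
            · rw [hwx]
              exact iff_of_false (SimpleGraph.irrefl _) (fun h => hxc (h ▸ hz))
            · rw [pivot_adj_xy huv hxu hxv hwu hwv]
              have hT : ¬ Tog G u v x w := by
                rintro ⟨h, -, -⟩
                rcases h with h | h
                exacts [hnxu h.symm, hnxv h.symm]
              constructor
              · rintro ⟨-, ⟨h, -⟩ | ⟨-, h⟩⟩
                exacts [(hza w).mp h, absurd h hT]
              · intro h
                exact ⟨fun he => hxc (by rw [he, h]; exact hz), Or.inl ⟨(hza w).mpr h, hT⟩⟩
      · rintro w (⟨g1, -, -⟩ | ⟨g, -⟩ | ⟨g, -⟩)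
        · exact hzs w g1
        · rcases g with g | g
          exacts [absurd g hznu, absurd hz g.1]
        · rcases g with g | g
          exacts [absurd g hznv, absurd hz g.1]

lemma pivot_preserves {G : SimpleGraph V} (h : IsLeafAttachedCMP G) {u v : V}
    (huv : G.Adj u v) : IsLeafAttachedCMP (pivotEdge G u v) := by
  obtain ⟨core, r, hrefl, hsymm, htrans, hcore, hadj, hleaf⟩ := h
  by_cases hu : u ∈ core
  · by_cases hv : v ∈ core
    · exact caseA hrefl hsymm htrans hcore hadj hleaf huv hu hv
    · exact caseB hrefl hsymm htrans hcore hadj hleaf huv hu hv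
  · by_cases hv : v ∈ core
    · rw [pivot_comm huv]
      exact caseB hrefl hsymm htrans hcore hadj hleaf huv.symm hv hu
    · obtain ⟨z, hz, hza, -⟩ := hleaf v hv
      exact absurd (by rw [(hza u).mp huv.symm]; exact hz : u ∈ core) hu

lemma equiv_preserves {G G' : SimpleGraph V} (h : PivotEquiv G G')
    (hG : IsLeafAttachedCMP G) : IsLeafAttachedCMP G' := by
  induction h with
  | refl => exact hG
  | tail _ hstep ih =>
      obtain ⟨u, v, huv, rfl⟩ := hstep
      exact pivot_preserves ih huv

lemma no2P2 {G : SimpleGraph V} (h : IsLeafAttachedCMP G) {a b c d : V}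
    (hab : G.Adj a b) (hcd : G.Adj c d)
    (hac : ¬ G.Adj a c) (had : ¬ G.Adj a d) (hbc : ¬ G.Adj b c) (hbd : ¬ G.Adj b d)
    (hacn : a ≠ c) (hadn : a ≠ d) (hbcn : b ≠ c) (hbdn : b ≠ d) : False := by
  classical
  obtain ⟨core, r, hrefl, hsymm, htrans, hcore, hadj, hleaf⟩ := h
  have hedge : ∀ p q, G.Adj p q → ∃ s t, ((s = p ∧ t = q) ∨ (s = q ∧ t = p)) ∧
      s ∈ core ∧ (t ∈ core ∨ ((∀ w, G.Adj t w ↔ w = s) ∧ (∀ w, r s w → w = s))) := by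
    intro p q hpq
    by_cases hp : p ∈ core
    · by_cases hq : q ∈ core
      · exact ⟨p, q, Or.inl ⟨rfl, rfl⟩, hp, Or.inl hq⟩
      · obtain ⟨ha, hs, -⟩ := leaf_at hleaf hq hpq.symm
        exact ⟨p, q, Or.inl ⟨rfl, rfl⟩, hp, Or.inr ⟨ha, hs⟩⟩
    · obtain ⟨ha, hs, hc⟩ := leaf_at hleaf hp hpq
      exact ⟨q, p, Or.inr ⟨rfl, rfl⟩, hc, Or.inr ⟨ha, hs⟩⟩
  obtain ⟨s1, t1, hor1, hsc1, -⟩ := hedge a b hab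
  obtain ⟨s2, t2, hor2, hsc2, h2⟩ := hedge c d hcd
  have hmem1 : s1 = a ∨ s1 = b := by
    rcases hor1 with ⟨h', -⟩ | ⟨h', -⟩
    exacts [Or.inl h', Or.inr h']
  have hmem2 : s2 = c ∨ s2 = d := by
    rcases hor2 with ⟨h', -⟩ | ⟨h', -⟩
    exacts [Or.inl h', Or.inr h']
  have hmem2t : t2 = c ∨ t2 = d := by
    rcases hor2 with ⟨-, h'⟩ | ⟨-, h'⟩
    exacts [Or.inr h', Or.inl h']
  have hadj2 : G.Adj s2 t2 := by
    rcases hor2 with ⟨h1', h2'⟩ | ⟨h1', h2'⟩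
    · rw [h1', h2']; exact hcd
    · rw [h1', h2']; exact hcd.symm
  have hcross : ∀ x y, (x = a ∨ x = b) → (y = c ∨ y = d) → ¬ G.Adj x y ∧ x ≠ y := by
    rintro x y (rfl | rfl) (rfl | rfl)
    exacts [⟨hac, hacn⟩, ⟨had, hadn⟩, ⟨hbc, hbcn⟩, ⟨hbd, hbdn⟩]
  obtain ⟨hn12, hne12⟩ := hcross s1 s2 hmem1 hmem2
  obtain ⟨hn1t2, hne1t2⟩ := hcross s1 t2 hmem1 hmem2t
  have hr12 : r s1 s2 := by
    by_contra h'
    exact hn12 ((hadj s1 hsc1 s2 hsc2).mpr h')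
  rcases h2 with h2c | ⟨-, hsing⟩
  · have hr1t2 : r s1 t2 := by
      by_contra h'
      exact hn1t2 ((hadj s1 hsc1 t2 h2c).mpr h')
    exact (hadj s2 hsc2 t2 h2c).mp hadj2 (htrans s2 s1 t2 (hsymm _ _ hr12) hr1t2)
  · exact hne12 (hsing s1 (hsymm _ _ hr12))

instance : DecidableRel twoP2.Adj := fun i j =>
  decidable_of_iff _ (SimpleGraph.fromRel_adj _ i j).symm

theorem leafAttachedCMP_twoP2_free' {V : Type*} (G : SimpleGraph V)
    (h : IsLeafAttachedCMP G) :
    ¬ HasPivotMinor G twoP2 := by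
  rintro ⟨s, G', hequiv, ⟨e⟩⟩
  have hG' : IsLeafAttachedCMP G' := equiv_preserves hequiv h
  have hiso : ∀ i j : Fin 4, G'.Adj (e.symm i).1 (e.symm j).1 ↔ twoP2.Adj i j := by
    intro i j
    exact (SimpleGraph.Iso.symm e).map_rel_iff
  have hne : ∀ i j : Fin 4, i ≠ j → (e.symm i).1 ≠ (e.symm j).1 := by
    intro i j hij h'
    exact hij (e.symm.toEquiv.injective (Subtype.coe_injective h'))
  refine no2P2 hG' ((hiso 0 1).mpr (by decide)) ((hiso 2 3).mpr (by decide))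
    (fun h' => (by decide : ¬ twoP2.Adj 0 2) ((hiso 0 2).mp h'))
    (fun h' => (by decide : ¬ twoP2.Adj 0 3) ((hiso 0 3).mp h'))
    (fun h' => (by decide : ¬ twoP2.Adj 1 2) ((hiso 1 2).mp h'))
    (fun h' => (by decide : ¬ twoP2.Adj 1 3) ((hiso 1 3).mp h'))
    (hne 0 2 (by decide)) (hne 0 3 (by decide)) (hne 1 2 (by decide)) (hne 1 3 (by decide))

end Aux

/-- Every leaf-attached complete multipartite graph has no
pivot-minor isomorphic to `2P₂`. -/
theorem leafAttachedCMP_twoP2_free {V : Type*} [Fintype V] (G : SimpleGraph V)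
    (h : IsLeafAttachedCMP G) :
    ¬ HasPivotMinor G twoP2 := by
  exact leafAttachedCMP_twoP2_free' G h
end

section
/- A finite simple graph G has no induced subgraph isomorphic to the bull, the claw K_{1,3}, or P₅ if and only if every connected component of G contains no independent set of size 3 (equivalently, every component has no induced subgraph isomorphic to 3P₁). -/
/-!  Basic notions: local complementation, edge pivot, pivot-equivalence, pivot-minors. -/

variable {V : Type*} {W : Type*}

/-- The bull: the triangle `{0,1,2}` with pendant vertices `3` attached to `0`
and `4` attached to `1`. -/
def bull : SimpleGraph (Fin 5) :=
  SimpleGraph.fromRel (fun x y =>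
    (x.val = 0 ∧ y.val = 1) ∨ (x.val = 0 ∧ y.val = 2) ∨ (x.val = 1 ∧ y.val = 2) ∨
    (x.val = 0 ∧ y.val = 3) ∨ (x.val = 1 ∧ y.val = 4))

/-- The claw `K_{1,3}`: centre `0` adjacent to the three leaves `1, 2, 3`. -/
def claw : SimpleGraph (Fin 4) :=
  SimpleGraph.fromRel (fun x _ => x.val = 0)

lemma hasInd_of_map {V W : Type*} {G : SimpleGraph V} {H : SimpleGraph W} (f : W → V)
    (hf : Function.Injective f) (h : ∀ i j, G.Adj (f i) (f j) ↔ H.Adj i j) :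
    HasInducedSubgraphIso G H := by
  refine ⟨Set.range f, ⟨SimpleGraph.Iso.symm
    { toEquiv := Equiv.ofInjective f hf, map_rel_iff' := ?_ }⟩⟩
  intro i j
  simpa using h i j

lemma claw_adj (i j : Fin 4) : claw.Adj i j ↔ i ≠ j ∧ (i.val = 0 ∨ j.val = 0) :=
  SimpleGraph.fromRel_adj _ i j

lemma bull_adj (i j : Fin 5) : bull.Adj i j ↔ i ≠ j ∧
    (((i.val = 0 ∧ j.val = 1) ∨ (i.val = 0 ∧ j.val = 2) ∨ (i.val = 1 ∧ j.val = 2) ∨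
      (i.val = 0 ∧ j.val = 3) ∨ (i.val = 1 ∧ j.val = 4)) ∨
     ((j.val = 0 ∧ i.val = 1) ∨ (j.val = 0 ∧ i.val = 2) ∨ (j.val = 1 ∧ i.val = 2) ∨
      (j.val = 0 ∧ i.val = 3) ∨ (j.val = 1 ∧ i.val = 4))) :=
  SimpleGraph.fromRel_adj _ i j

lemma claw_of {V : Type*} {G : SimpleGraph V} {x a b c : V}
    (hxa : G.Adj x a) (hxb : G.Adj x b) (hxc : G.Adj x c)
    (nab : ¬ G.Adj a b) (nac : ¬ G.Adj a c) (nbc : ¬ G.Adj b c)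
    (dab : a ≠ b) (dac : a ≠ c) (dbc : b ≠ c) :
    HasInducedSubgraphIso G claw := by
  have hax := hxa.symm; have hbx := hxb.symm; have hcx := hxc.symm
  have nba : ¬ G.Adj b a := fun h => nab h.symm
  have nca : ¬ G.Adj c a := fun h => nac h.symm
  have ncb : ¬ G.Adj c b := fun h => nbc h.symm
  have dxa := hxa.ne; have dxb := hxb.ne; have dxc := hxc.ne
  apply hasInd_of_map ![x, a, b, c]
  · intro i j hij
    fin_cases i <;> fin_cases j <;> simp_all
  · intro i j
    fin_cases i <;> fin_cases j <;>
      simp_all [claw_adj, G.irrefl, Fin.ext_iff] <;> decide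

lemma bull_of {V : Type*} {G : SimpleGraph V} {x y z s t : V}
    (hxy : G.Adj x y) (hxz : G.Adj x z) (hyz : G.Adj y z)
    (hxs : G.Adj x s) (hyt : G.Adj y t)
    (nys : ¬ G.Adj y s) (nzs : ¬ G.Adj z s) (nxt : ¬ G.Adj x t)
    (nzt : ¬ G.Adj z t) (nst : ¬ G.Adj s t) :
    HasInducedSubgraphIso G bull := by
  have hyx := hxy.symm; have hzx := hxz.symm; have hzy := hyz.symm
  have hsx := hxs.symm; have hty := hyt.symm
  have nsy : ¬ G.Adj s y := fun h => nys h.symm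
  have nsz : ¬ G.Adj s z := fun h => nzs h.symm
  have ntx : ¬ G.Adj t x := fun h => nxt h.symm
  have ntz : ¬ G.Adj t z := fun h => nzt h.symm
  have nts : ¬ G.Adj t s := fun h => nst h.symm
  have dxy := hxy.ne; have dxz := hxz.ne; have dyz := hyz.ne
  have dxs := hxs.ne; have dyt := hyt.ne
  have dys : y ≠ s := by intro h; exact nzs (by rw [← h]; exact hzy)
  have dzs : z ≠ s := by intro h; exact nys (by rw [← h]; exact hyz)
  have dxt : x ≠ t := by intro h; exact nzt (by rw [← h]; exact hzx)
  have dzt : z ≠ t := by intro h; exact nxt (by rw [← h]; exact hxz)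
  have dst : s ≠ t := by intro h; exact nxt (by rw [← h]; exact hxs)
  apply hasInd_of_map ![x, y, z, s, t]
  · intro i j hij
    fin_cases i <;> fin_cases j <;> simp_all
  · intro i j
    fin_cases i <;> fin_cases j <;>
      simp_all [bull_adj, G.irrefl, Fin.ext_iff] <;> decide

lemma p5_of {V : Type*} {G : SimpleGraph V} {v0 v1 v2 v3 v4 : V}
    (h01 : G.Adj v0 v1) (h12 : G.Adj v1 v2) (h23 : G.Adj v2 v3) (h34 : G.Adj v3 v4)
    (n02 : ¬ G.Adj v0 v2) (n03 : ¬ G.Adj v0 v3) (n04 : ¬ G.Adj v0 v4)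
    (n13 : ¬ G.Adj v1 v3) (n14 : ¬ G.Adj v1 v4) (n24 : ¬ G.Adj v2 v4) :
    HasInducedSubgraphIso G (SimpleGraph.pathGraph 5) := by
  have h10 := h01.symm; have h21 := h12.symm; have h32 := h23.symm; have h43 := h34.symm
  have n20 : ¬ G.Adj v2 v0 := fun h => n02 h.symm
  have n30 : ¬ G.Adj v3 v0 := fun h => n03 h.symm
  have n40 : ¬ G.Adj v4 v0 := fun h => n04 h.symm
  have n31 : ¬ G.Adj v3 v1 := fun h => n13 h.symm
  have n41 : ¬ G.Adj v4 v1 := fun h => n14 h.symm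
  have n42 : ¬ G.Adj v4 v2 := fun h => n24 h.symm
  have d01 := h01.ne; have d12 := h12.ne; have d23 := h23.ne; have d34 := h34.ne
  have d02 : v0 ≠ v2 := by intro h; exact n03 (by rw [h]; exact h23)
  have d03 : v0 ≠ v3 := by intro h; exact n04 (by rw [h]; exact h34)
  have d04 : v0 ≠ v4 := by intro h; exact n14 (by rw [← h]; exact h10)
  have d13 : v1 ≠ v3 := by intro h; exact n14 (by rw [h]; exact h34)
  have d14 : v1 ≠ v4 := by intro h; exact n13 (by rw [h]; exact h43)
  have d24 : v2 ≠ v4 := by intro h; exact n14 (by rw [← h]; exact h12)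
  apply hasInd_of_map ![v0, v1, v2, v3, v4]
  · intro i j hij
    fin_cases i <;> fin_cases j <;> simp_all
  · intro i j
    fin_cases i <;> fin_cases j <;>
      simp_all [SimpleGraph.pathGraph_adj, G.irrefl, Fin.ext_iff] <;> decide

lemma reach_dist_triangle {V : Type*} {G : SimpleGraph V} {u v w : V}
    (h1 : G.Reachable u v) (h2 : G.Reachable v w) :
    G.dist u w ≤ G.dist u v + G.dist v w := by
  obtain ⟨p, hp⟩ := h1.exists_walk_length_eq_dist
  obtain ⟨q, hq⟩ := h2.exists_walk_length_eq_dist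
  rw [← hp, ← hq, ← SimpleGraph.Walk.length_append]
  apply SimpleGraph.dist_le

lemma geodesic_getVert {V : Type*} {G : SimpleGraph V} :
    ∀ {a b : V} (w : G.Walk a b), w.length = G.dist a b →
    ∀ i, i ≤ w.length →
      G.dist a (w.getVert i) = i ∧ G.dist (w.getVert i) b = w.length - i := by
  intro a b w
  induction w with
  | nil =>
    intro _ i hi
    simp only [SimpleGraph.Walk.length_nil, Nat.le_zero] at hi
    subst hi
    simp [SimpleGraph.dist_self]
  | @cons a a' b h p ih =>
    intro hlen i hi
    have hcl : (SimpleGraph.Walk.cons h p).length = p.length + 1 := by simp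
    have hd : G.dist a b = p.length + 1 := by rw [← hlen, hcl]
    have hle : G.dist a' b ≤ p.length := SimpleGraph.dist_le p
    have h2 : G.dist a b ≤ G.dist a' b + 1 := by
      obtain ⟨q, hq⟩ := (p.reachable).exists_walk_length_eq_dist
      have := SimpleGraph.dist_le (SimpleGraph.Walk.cons h q)
      simp only [SimpleGraph.Walk.length_cons] at this
      omega
    have hp : p.length = G.dist a' b := by omega
    cases i with
    | zero =>
      refine ⟨by simp [SimpleGraph.dist_self], ?_⟩
      simpa using hd
    | succ i =>
      have hi' : i ≤ p.length := by rw [hcl] at hi; omega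
      obtain ⟨ih1, ih2⟩ := ih hp i hi'
      have hgv : (SimpleGraph.Walk.cons h p).getVert (i + 1) = p.getVert i :=
        SimpleGraph.Walk.getVert_cons_succ p h
      rw [hgv, hcl]
      have reach_xb : G.Reachable (p.getVert i) b := (p.drop i).reachable
      have reach_a'x : G.Reachable a' (p.getVert i) := (p.reachable).trans reach_xb.symm
      have up : G.dist a (p.getVert i) ≤ i + 1 := by
        have ht := reach_dist_triangle (h.reachable) reach_a'x
        have h1 : G.dist a a' ≤ 1 := by simpa using SimpleGraph.dist_le h.toWalk
        omega
      have reach_ax : G.Reachable a (p.getVert i) := (h.reachable).trans reach_a'x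
      have low : G.dist a b ≤ G.dist a (p.getVert i) + G.dist (p.getVert i) b :=
        reach_dist_triangle reach_ax reach_xb
      constructor <;> omega

lemma walk_first_bad {V : Type*} {G : SimpleGraph V} {P : V → Prop} [DecidablePred P] :
    ∀ {c a : V}, G.Walk c a → ¬ P c → P a → ∃ r q, G.Adj r q ∧ ¬ P r ∧ P q := by
  intro c a w
  induction w with
  | nil => intro h1 h2; exact absurd h2 h1
  | @cons c v a h p ih =>
    intro h1 h2
    by_cases hv : P v
    · exact ⟨c, v, h, h1, hv⟩
    · exact ih hv h2

lemma p5_of_dist {V : Type*} {G : SimpleGraph V} {a b : V}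
    (hr : G.Reachable a b) (h4 : 4 ≤ G.dist a b) :
    HasInducedSubgraphIso G (SimpleGraph.pathGraph 5) := by
  obtain ⟨w, hw⟩ := hr.exists_walk_length_eq_dist
  have hlen : 4 ≤ w.length := by omega
  have key : ∀ i, i ≤ w.length → G.dist a (w.getVert i) = i :=
    fun i hi => (geodesic_getVert w hw i hi).1
  have adj : ∀ i, i < w.length → G.Adj (w.getVert i) (w.getVert (i + 1)) :=
    fun i hi => w.adj_getVert_succ hi
  have nadj : ∀ i j, i + 2 ≤ j → j ≤ w.length → ¬ G.Adj (w.getVert i) (w.getVert j) := by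
    intro i j hij hj hadj
    have hi : i ≤ w.length := by omega
    have hdi := key i hi
    have hdj := key j hj
    have r1 : G.Reachable a (w.getVert i) := (w.reachable).trans ((w.drop i).reachable).symm
    have ht := reach_dist_triangle r1 hadj.reachable
    have h1 : G.dist (w.getVert i) (w.getVert j) ≤ 1 := by simpa using SimpleGraph.dist_le hadj.toWalk
    omega
  exact p5_of (adj 0 (by omega)) (adj 1 (by omega)) (adj 2 (by omega)) (adj 3 (by omega))
    (nadj 0 2 (by omega) (by omega)) (nadj 0 3 (by omega) (by omega))
    (nadj 0 4 (by omega) (by omega)) (nadj 1 3 (by omega) (by omega))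
    (nadj 1 4 (by omega) (by omega)) (nadj 2 4 (by omega) (by omega))

lemma key_lemma {V : Type*} {G : SimpleGraph V} {a b c : V}
    (hrab : G.Reachable a b) (hrac : G.Reachable a c)
    (nab : ¬ G.Adj a b) (nac : ¬ G.Adj a c) (nbc : ¬ G.Adj b c)
    (dab : a ≠ b) (dac : a ≠ c) (dbc : b ≠ c) :
    HasInducedSubgraphIso G bull ∨ HasInducedSubgraphIso G claw ∨
      HasInducedSubgraphIso G (SimpleGraph.pathGraph 5) := by
  classical
  have hk0 : G.dist a b ≠ 0 := SimpleGraph.dist_ne_zero_iff_ne_and_reachable.mpr ⟨dab, hrab⟩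
  have hk1 : G.dist a b ≠ 1 := fun h => nab (SimpleGraph.dist_eq_one_iff_adj.mp h)
  by_cases h4 : 4 ≤ G.dist a b
  · exact Or.inr (Or.inr (p5_of_dist hrab h4))
  obtain ⟨w, hw⟩ := hrab.exists_walk_length_eq_dist
  have hk23 : w.length = 2 ∨ w.length = 3 := by omega
  -- symmetric negations of the triple
  have nba : ¬ G.Adj b a := fun h => nab h.symm
  have nca : ¬ G.Adj c a := fun h => nac h.symm
  have ncb : ¬ G.Adj c b := fun h => nbc h.symm
  rcases hk23 with hk | hk
  · -- distance 2 case
    set p := w.getVert 1 with hp_def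
    have hap : G.Adj a p := by
      have := w.adj_getVert_succ (show 0 < w.length by omega)
      rwa [w.getVert_zero] at this
    have hpb : G.Adj p b := by
      have := w.adj_getVert_succ (show 1 < w.length by omega)
      rwa [show (1 : ℕ) + 1 = w.length by omega, w.getVert_length] at this
    have dcp : c ≠ p := fun h => nac (h ▸ hap)
    by_cases hcp : G.Adj c p
    · exact Or.inr (Or.inl (claw_of hap.symm hpb hcp.symm nab nac nbc dab dac dbc))
    · -- find the attachment pair (r, q)
      obtain ⟨wc⟩ := hrac.symm
      obtain ⟨r, q, hrq, hPr, hPq⟩ := walk_first_bad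
        (P := fun x => (x = a ∨ x = p ∨ x = b) ∨ (G.Adj x a ∨ G.Adj x p ∨ G.Adj x b)) wc
        (by rintro ((h | h | h) | h | h | h)
            exacts [dac h.symm, dcp h, dbc h.symm, nca h, hcp h, ncb h])
        (Or.inl (Or.inl rfl))
      have dra : r ≠ a := fun h => hPr (Or.inl (Or.inl h))
      have drp : r ≠ p := fun h => hPr (Or.inl (Or.inr (Or.inl h)))
      have drb : r ≠ b := fun h => hPr (Or.inl (Or.inr (Or.inr h)))
      have nra : ¬ G.Adj r a := fun h => hPr (Or.inr (Or.inl h))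
      have nrp : ¬ G.Adj r p := fun h => hPr (Or.inr (Or.inr (Or.inl h)))
      have nrb : ¬ G.Adj r b := fun h => hPr (Or.inr (Or.inr (Or.inr h)))
      have dqa : q ≠ a := fun h => nra (h ▸ hrq)
      have dqp : q ≠ p := fun h => nrp (h ▸ hrq)
      have dqb : q ≠ b := fun h => nrb (h ▸ hrq)
      have hq : G.Adj q a ∨ G.Adj q p ∨ G.Adj q b := by
        rcases hPq with (h | h | h) | h
        · exact absurd h dqa
        · exact absurd h dqp
        · exact absurd h dqb
        · exact h
      have nar : ¬ G.Adj a r := fun h => nra h.symm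
      have npr : ¬ G.Adj p r := fun h => nrp h.symm
      have nbr : ¬ G.Adj b r := fun h => nrb h.symm
      by_cases hqa : G.Adj q a <;> by_cases hqb : G.Adj q b <;> by_cases hqp : G.Adj q p
      · -- qa, qb, qp : claw at q
        exact Or.inr (Or.inl (claw_of hqa hqb hrq.symm nab nar nbr dab dra.symm drb.symm))
      · exact Or.inr (Or.inl (claw_of hqa hqb hrq.symm nab nar nbr dab dra.symm drb.symm))
      · -- qa, ¬qb, qp : bull (triangle a p q, pendant b at p, r at q)
        exact Or.inl (bull_of hqp.symm hap.symm hqa hpb hrq.symm hqb nab npr nar nbr)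
      · -- qa only : P5  r q a p b
        exact Or.inr (Or.inr (p5_of hrq hqa hap hpb nra nrp nrb
          (fun h => hqp h) hqb nab))
      · -- ¬qa, qb, qp : bull (triangle b p q, pendant a at p, r at q)
        exact Or.inl (bull_of hqp.symm hpb hqb hap.symm hrq.symm hqa nba npr nbr nar)
      · -- qb only : P5  r q b p a
        exact Or.inr (Or.inr (p5_of hrq hqb hpb.symm hap.symm nrb nrp nra hqp hqa nba))
      · -- qp only : claw at p with leaves a b q
        exact Or.inr (Or.inl (claw_of hap.symm hpb hqp.symm nab
          (fun h => hqa h.symm) (fun h => hqb h.symm) dab dqa.symm dqb.symm))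
      · -- none : contradiction
        tauto
  · -- distance 3 case
    set p1 := w.getVert 1 with hp1_def
    set p2 := w.getVert 2 with hp2_def
    have hap1 : G.Adj a p1 := by
      have := w.adj_getVert_succ (show 0 < w.length by omega)
      rwa [w.getVert_zero] at this
    have hp12 : G.Adj p1 p2 := w.adj_getVert_succ (show 1 < w.length by omega)
    have hp2b : G.Adj p2 b := by
      have := w.adj_getVert_succ (show 2 < w.length by omega)
      rwa [show (2 : ℕ) + 1 = w.length by omega, w.getVert_length] at this
    have hd2 : G.dist a p2 = 2 := by
      have := (geodesic_getVert w hw 2 (by omega)).1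
      rwa [← hp2_def] at this
    have hd1b : G.dist p1 b = 2 := by
      have := (geodesic_getVert w hw 1 (by omega)).2
      rw [← hp1_def] at this
      omega
    have nap2 : ¬ G.Adj a p2 := fun h => by
      have := SimpleGraph.dist_eq_one_iff_adj.mpr h; omega
    have np1b : ¬ G.Adj p1 b := fun h => by
      have := SimpleGraph.dist_eq_one_iff_adj.mpr h; omega
    have dap2 : a ≠ p2 := fun h => by
      rw [← h] at hd2; simp [SimpleGraph.dist_self] at hd2
    have dp1b : p1 ≠ b := fun h => by
      rw [h] at hd1b; simp [SimpleGraph.dist_self] at hd1b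
    have dcp1 : c ≠ p1 := fun h => nac (h ▸ hap1)
    have dcp2 : c ≠ p2 := fun h => ncb (h ▸ hp2b)
    have np2a : ¬ G.Adj p2 a := fun h => nap2 h.symm
    have nbp1 : ¬ G.Adj b p1 := fun h => np1b h.symm
    by_cases hcp1 : G.Adj c p1 <;> by_cases hcp2 : G.Adj c p2
    · -- bull: triangle p1 p2 c, pendants a at p1, b at p2
      exact Or.inl (bull_of hp12 hcp1.symm hcp2.symm hap1.symm hp2b
        np2a nca np1b ncb nab)
    · -- claw at p1 : leaves a p2 c
      exact Or.inr (Or.inl (claw_of hap1.symm hp12 hcp1.symm nap2 nac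
        (fun h => hcp2 h.symm) dap2 dac dcp2.symm))
    · -- claw at p2 : leaves b p1 c
      exact Or.inr (Or.inl (claw_of hp2b hp12.symm hcp2.symm nbp1 nbc
        (fun h => hcp1 h.symm) dp1b.symm dbc dcp1.symm))
    · -- c has no neighbour on the path: find attachment pair
      obtain ⟨wc⟩ := hrac.symm
      obtain ⟨r, q, hrq, hPr, hPq⟩ := walk_first_bad
        (P := fun x => (x = a ∨ x = p1 ∨ x = p2 ∨ x = b) ∨
          (G.Adj x a ∨ G.Adj x p1 ∨ G.Adj x p2 ∨ G.Adj x b)) wc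
        (by rintro ((h | h | h | h) | h | h | h | h)
            exacts [dac h.symm, dcp1 h, dcp2 h, dbc h.symm, nca h, hcp1 h, hcp2 h, ncb h])
        (Or.inl (Or.inl rfl))
      have dra : r ≠ a := fun h => hPr (Or.inl (Or.inl h))
      have drp1 : r ≠ p1 := fun h => hPr (Or.inl (Or.inr (Or.inl h)))
      have drp2 : r ≠ p2 := fun h => hPr (Or.inl (Or.inr (Or.inr (Or.inl h))))
      have drb : r ≠ b := fun h => hPr (Or.inl (Or.inr (Or.inr (Or.inr h))))
      have nra : ¬ G.Adj r a := fun h => hPr (Or.inr (Or.inl h))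
      have nrp1 : ¬ G.Adj r p1 := fun h => hPr (Or.inr (Or.inr (Or.inl h)))
      have nrp2 : ¬ G.Adj r p2 := fun h => hPr (Or.inr (Or.inr (Or.inr (Or.inl h))))
      have nrb : ¬ G.Adj r b := fun h => hPr (Or.inr (Or.inr (Or.inr (Or.inr h))))
      have dqa : q ≠ a := fun h => nra (h ▸ hrq)
      have dqp1 : q ≠ p1 := fun h => nrp1 (h ▸ hrq)
      have dqp2 : q ≠ p2 := fun h => nrp2 (h ▸ hrq)
      have dqb : q ≠ b := fun h => nrb (h ▸ hrq)
      have hq : G.Adj q a ∨ G.Adj q p1 ∨ G.Adj q p2 ∨ G.Adj q b := by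
        rcases hPq with (h | h | h | h) | h
        · exact absurd h dqa
        · exact absurd h dqp1
        · exact absurd h dqp2
        · exact absurd h dqb
        · exact h
      have nar : ¬ G.Adj a r := fun h => nra h.symm
      have np1r : ¬ G.Adj p1 r := fun h => nrp1 h.symm
      have np2r : ¬ G.Adj p2 r := fun h => nrp2 h.symm
      have nbr : ¬ G.Adj b r := fun h => nrb h.symm
      by_cases hqa : G.Adj q a <;> by_cases hqb : G.Adj q b
      · -- claw at q : leaves a b r
        exact Or.inr (Or.inl (claw_of hqa hqb hrq.symm nab nar nbr dab dra.symm drb.symm))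
      · -- q adj a, not b
        by_cases hqp2 : G.Adj q p2
        · -- claw at q : leaves a p2 r
          exact Or.inr (Or.inl (claw_of hqa hqp2 hrq.symm nap2 nar np2r dap2 dra.symm drp2.symm))
        · by_cases hqp1 : G.Adj q p1
          · -- bull: triangle p1 q a, pendants p2 at p1, r at q
            exact Or.inl (bull_of hqp1.symm hap1.symm hqa hp12 hrq.symm hqp2 nap2 np1r nar np2r)
          · -- P5 : r q a p1 p2
            exact Or.inr (Or.inr (p5_of hrq hqa hap1 hp12 nra nrp1 nrp2 hqp1 hqp2 nap2))
      · -- q adj b, not a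
        by_cases hqp1 : G.Adj q p1
        · -- claw at q : leaves b p1 r
          exact Or.inr (Or.inl (claw_of hqb hqp1 hrq.symm nbp1 nbr np1r dp1b.symm drb.symm drp1.symm))
        · by_cases hqp2 : G.Adj q p2
          · -- bull: triangle p2 q b, pendants p1 at p2, r at q
            exact Or.inl (bull_of hqp2.symm hp2b hqb hp12.symm hrq.symm hqp1 nbp1 np2r nbr np1r)
          · -- P5 : r q b p2 p1
            exact Or.inr (Or.inr (p5_of hrq hqb hp2b.symm hp12.symm nrb nrp2 nrp1 hqp2 hqp1 nbp1))
      · -- q adj neither a nor b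
        by_cases hqp1 : G.Adj q p1 <;> by_cases hqp2 : G.Adj q p2
        · -- bull: triangle p1 p2 q, pendants a at p1, b at p2
          exact Or.inl (bull_of hp12 hqp1.symm hqp2.symm hap1.symm hp2b np2a
            hqa np1b hqb nab)
        · -- claw at p1 : leaves a p2 q
          exact Or.inr (Or.inl (claw_of hap1.symm hp12 hqp1.symm nap2 (fun h => hqa h.symm)
            (fun h => hqp2 h.symm) dap2 dqa.symm dqp2.symm))
        · -- claw at p2 : leaves b p1 q
          exact Or.inr (Or.inl (claw_of hp2b hp12.symm hqp2.symm nbp1 (fun h => hqb h.symm)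
            (fun h => hqp1 h.symm) dp1b.symm dqb.symm dqp1.symm))
        · tauto

lemma bot3_of {V : Type*} {G : SimpleGraph V} {s : Set V} {v0 v1 v2 : V}
    (m0 : v0 ∈ s) (m1 : v1 ∈ s) (m2 : v2 ∈ s)
    (d01 : v0 ≠ v1) (d02 : v0 ≠ v2) (d12 : v1 ≠ v2)
    (n01 : ¬ G.Adj v0 v1) (n02 : ¬ G.Adj v0 v2) (n12 : ¬ G.Adj v1 v2) :
    HasInducedSubgraphIso (G.induce s) (⊥ : SimpleGraph (Fin 3)) := by
  have n10 : ¬ G.Adj v1 v0 := fun h => n01 h.symm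
  have n20 : ¬ G.Adj v2 v0 := fun h => n02 h.symm
  have n21 : ¬ G.Adj v2 v1 := fun h => n12 h.symm
  apply hasInd_of_map ![⟨v0, m0⟩, ⟨v1, m1⟩, ⟨v2, m2⟩]
  · intro i j hij
    fin_cases i <;> fin_cases j <;> simp_all [Subtype.ext_iff]
  · intro i j
    fin_cases i <;> fin_cases j <;>
      simp_all [SimpleGraph.comap_adj, G.irrefl]

lemma comp_of_triple {V W : Type*} {G : SimpleGraph V} {H : SimpleGraph W}
    (hiso : HasInducedSubgraphIso G H) {w0 w1 w2 : W}
    (d01 : w0 ≠ w1) (d02 : w0 ≠ w2) (d12 : w1 ≠ w2)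
    (n01 : ¬ H.Adj w0 w1) (n02 : ¬ H.Adj w0 w2) (n12 : ¬ H.Adj w1 w2)
    (r01 : H.Reachable w0 w1) (r02 : H.Reachable w0 w2) :
    ∃ c : G.ConnectedComponent,
      HasInducedSubgraphIso (G.induce c.supp) (⊥ : SimpleGraph (Fin 3)) := by
  obtain ⟨s, ⟨e⟩⟩ := hiso
  set v0 : V := ((e.symm w0 : ↥s) : V) with hv0
  set v1 : V := ((e.symm w1 : ↥s) : V) with hv1
  set v2 : V := ((e.symm w2 : ↥s) : V) with hv2
  have adj_iff : ∀ i j : W, G.Adj ((e.symm i : ↥s) : V) ((e.symm j : ↥s) : V) ↔ H.Adj i j := by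
    intro i j
    have := e.symm.map_adj_iff (v := i) (w := j)
    simpa using this
  have reach : ∀ i j : W, H.Reachable i j →
      G.Reachable ((e.symm i : ↥s) : V) ((e.symm j : ↥s) : V) := by
    intro i j hr
    exact (hr.map e.symm.toHom).map (SimpleGraph.Embedding.induce s).toHom
  have inj : ∀ i j : W, ((e.symm i : ↥s) : V) = ((e.symm j : ↥s) : V) → i = j := by
    intro i j h
    exact e.symm.toEquiv.injective (Subtype.ext h)
  have dv01 : v0 ≠ v1 := fun h => d01 (inj _ _ h)
  have dv02 : v0 ≠ v2 := fun h => d02 (inj _ _ h)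
  have dv12 : v1 ≠ v2 := fun h => d12 (inj _ _ h)
  have nv01 : ¬ G.Adj v0 v1 := fun h => n01 ((adj_iff _ _).mp h)
  have nv02 : ¬ G.Adj v0 v2 := fun h => n02 ((adj_iff _ _).mp h)
  have nv12 : ¬ G.Adj v1 v2 := fun h => n12 ((adj_iff _ _).mp h)
  have nv10 : ¬ G.Adj v1 v0 := fun h => nv01 h.symm
  have nv20 : ¬ G.Adj v2 v0 := fun h => nv02 h.symm
  have nv21 : ¬ G.Adj v2 v1 := fun h => nv12 h.symm
  refine ⟨G.connectedComponentMk v0, ?_⟩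
  have m0 : v0 ∈ (G.connectedComponentMk v0).supp := rfl
  have m1 : v1 ∈ (G.connectedComponentMk v0).supp :=
    (SimpleGraph.ConnectedComponent.sound (reach _ _ r01)).symm
  have m2 : v2 ∈ (G.connectedComponentMk v0).supp :=
    (SimpleGraph.ConnectedComponent.sound (reach _ _ r02)).symm
  exact bot3_of m0 m1 m2 dv01 dv02 dv12 nv01 nv02 nv12

lemma bull_reach_facts :
    (¬ bull.Adj 2 3 ∧ ¬ bull.Adj 2 4 ∧ ¬ bull.Adj 3 4) ∧
      bull.Reachable 2 3 ∧ bull.Reachable 2 4 := by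
  have h20 : bull.Adj 2 0 := by rw [bull_adj]; decide
  have h03 : bull.Adj 0 3 := by rw [bull_adj]; decide
  have h21 : bull.Adj 2 1 := by rw [bull_adj]; decide
  have h14 : bull.Adj 1 4 := by rw [bull_adj]; decide
  refine ⟨⟨?_, ?_, ?_⟩, h20.reachable.trans h03.reachable,
    h21.reachable.trans h14.reachable⟩ <;> rw [bull_adj] <;> decide

lemma claw_reach_facts :
    (¬ claw.Adj 1 2 ∧ ¬ claw.Adj 1 3 ∧ ¬ claw.Adj 2 3) ∧
      claw.Reachable 1 2 ∧ claw.Reachable 1 3 := by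
  have h10 : claw.Adj 1 0 := by rw [claw_adj]; decide
  have h02 : claw.Adj 0 2 := by rw [claw_adj]; decide
  have h03 : claw.Adj 0 3 := by rw [claw_adj]; decide
  refine ⟨⟨?_, ?_, ?_⟩, h10.reachable.trans h02.reachable,
    h10.reachable.trans h03.reachable⟩ <;> rw [claw_adj] <;> decide

lemma p5_reach_facts :
    (¬ (SimpleGraph.pathGraph 5).Adj 0 2 ∧ ¬ (SimpleGraph.pathGraph 5).Adj 0 4 ∧
      ¬ (SimpleGraph.pathGraph 5).Adj 2 4) ∧
      (SimpleGraph.pathGraph 5).Reachable 0 2 ∧ (SimpleGraph.pathGraph 5).Reachable 0 4 := by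
  have h01 : (SimpleGraph.pathGraph 5).Adj 0 1 := by rw [SimpleGraph.pathGraph_adj]; decide
  have h12 : (SimpleGraph.pathGraph 5).Adj 1 2 := by rw [SimpleGraph.pathGraph_adj]; decide
  have h23 : (SimpleGraph.pathGraph 5).Adj 2 3 := by rw [SimpleGraph.pathGraph_adj]; decide
  have h34 : (SimpleGraph.pathGraph 5).Adj 3 4 := by rw [SimpleGraph.pathGraph_adj]; decide
  refine ⟨⟨?_, ?_, ?_⟩,
    h01.reachable.trans h12.reachable,
    ((h01.reachable.trans h12.reachable).trans h23.reachable).trans h34.reachable⟩ <;>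
      rw [SimpleGraph.pathGraph_adj] <;> decide


/-- A finite simple graph `G` has no induced subgraph isomorphic
to the bull, the claw `K_{1,3}`, or `P₅` if and only if every connected component of
`G` has no induced subgraph isomorphic to `3P₁` (no independent set of size three). -/
theorem bullClawP5_free_iff {V : Type*} [Fintype V] (G : SimpleGraph V) :
    (¬ HasInducedSubgraphIso G bull ∧ ¬ HasInducedSubgraphIso G claw ∧
      ¬ HasInducedSubgraphIso G (SimpleGraph.pathGraph 5)) ↔
    ∀ c : G.ConnectedComponent,
      ¬ HasInducedSubgraphIso (G.induce c.supp) (⊥ : SimpleGraph (Fin 3)) := by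
  constructor
  · rintro ⟨hb, hcl, hp⟩ c ⟨s, ⟨e⟩⟩
    have adj_iff : ∀ i j : Fin 3,
        G.Adj (((e.symm i : ↥s) : ↥c.supp) : V) (((e.symm j : ↥s) : ↥c.supp) : V) ↔
          (⊥ : SimpleGraph (Fin 3)).Adj i j := by
      intro i j
      have := e.symm.map_adj_iff (v := i) (w := j)
      simpa using this
    have inj : ∀ i j : Fin 3,
        (((e.symm i : ↥s) : ↥c.supp) : V) = (((e.symm j : ↥s) : ↥c.supp) : V) → i = j := by
      intro i j hij
      exact e.symm.toEquiv.injective (Subtype.ext (Subtype.ext hij))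
    have mem : ∀ i : Fin 3, (((e.symm i : ↥s) : ↥c.supp) : V) ∈ c.supp := fun i =>
      ((e.symm i : ↥s) : ↥c.supp).2
    have reach : ∀ i j : Fin 3,
        G.Reachable (((e.symm i : ↥s) : ↥c.supp) : V) (((e.symm j : ↥s) : ↥c.supp) : V) := by
      intro i j
      apply SimpleGraph.ConnectedComponent.exact
      rw [(SimpleGraph.ConnectedComponent.mem_supp_iff _ _).mp (mem i),
        (SimpleGraph.ConnectedComponent.mem_supp_iff _ _).mp (mem j)]
    have key := key_lemma (G := G) (reach 0 1) (reach 0 2)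
      (fun h => by simpa using (adj_iff 0 1).mp h)
      (fun h => by simpa using (adj_iff 0 2).mp h)
      (fun h => by simpa using (adj_iff 1 2).mp h)
      (fun h => by exact absurd (inj 0 1 h) (by decide))
      (fun h => by exact absurd (inj 0 2 h) (by decide))
      (fun h => by exact absurd (inj 1 2 h) (by decide))
    rcases key with h | h | h
    · exact hb h
    · exact hcl h
    · exact hp h
  · intro h
    refine ⟨fun hi => ?_, fun hi => ?_, fun hi => ?_⟩
    · obtain ⟨⟨n1, n2, n3⟩, r1, r2⟩ := bull_reach_facts
      obtain ⟨c, hc⟩ := comp_of_triple hi (by decide) (by decide) (by decide) n1 n2 n3 r1 r2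
      exact h c hc
    · obtain ⟨⟨n1, n2, n3⟩, r1, r2⟩ := claw_reach_facts
      obtain ⟨c, hc⟩ := comp_of_triple hi (by decide) (by decide) (by decide) n1 n2 n3 r1 r2
      exact h c hc
    · obtain ⟨⟨n1, n2, n3⟩, r1, r2⟩ := p5_reach_facts
      obtain ⟨c, hc⟩ := comp_of_triple hi (by decide) (by decide) (by decide) n1 n2 n3 r1 r2
      exact h c hc
end
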